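/- (Stability condition, frequency-window form) Let ω̄ > 0, δ̄ > 0 and 0 < c < 1, and let P(λ) = λ⁴ + 2λ²(ω̄² - 1) + (ω̄² + 1)² - δ̄² over ℂ. Then every root λ ∈ ℂ of P satisfies Re(λ) < c if and only if ω̄ > √(1 - c²) and 2√(1 - c²)·√(ω̄² + c²) < δ̄ < √(4ω̄² + (ω̄² - 1 + c²)²). -/

import Mathlib

/-- For any complex `μ`, `(Re μ)² = (|μ²| + Re(μ²))/2`. -/
lemma re_sq_eq (μ : ℂ) : (μ.re)^2 = (‖μ^2‖ + (μ^2).re) / 2 := by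
  have h1 : ‖μ^2‖ = ‖μ‖ ^ 2 := by rw [norm_pow]
  have h2 : ‖μ‖ ^ 2 = μ.re^2 + μ.im^2 := by
    rw [Complex.sq_norm, Complex.normSq_apply]; ring
  have h3 : (μ^2).re = μ.re^2 - μ.im^2 := by
    rw [sq, Complex.mul_re]; ring
  rw [h1, h2, h3]; ring

/-- Condition "every square root of `v` has real part `< c`". -/
lemma cond_iff (c : ℝ) (hc : 0 < c) (v : ℂ) :
    (∀ μ : ℂ, μ^2 = v → μ.re < c) ↔ ‖v‖ + v.re < 2*c^2 := by
  constructor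
  · intro h
    obtain ⟨μ, hμ⟩ := IsAlgClosed.exists_pow_nat_eq v (n := 2) (by norm_num)
    have h1 := h μ hμ
    have h2 := h (-μ) ((neg_sq μ).trans hμ)
    rw [Complex.neg_re] at h2
    have hre : μ.re^2 < c^2 := by nlinarith
    have he := re_sq_eq μ
    rw [hμ] at he
    linarith [he ▸ hre]
  · intro hv μ hμ
    have he := re_sq_eq μ
    rw [hμ] at he
    nlinarith [norm_nonneg v]

lemma root_iff (w d : ℝ) (s : ℂ) (hs : s^2 = ((d^2 - 4*w : ℝ) : ℂ)) (μ : ℂ) :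
    μ ^ 4 + 2 * μ ^ 2 * ((w:ℂ) - 1) + ((w:ℂ) + 1) ^ 2 - (d:ℂ) ^ 2 = 0 ↔
      (μ^2 = (1 - (w:ℂ)) + s ∨ μ^2 = (1 - (w:ℂ)) - s) := by
  have hs' : s^2 = (d:ℂ)^2 - 4*(w:ℂ) := by rw [hs]; push_cast; ring
  have key : μ ^ 4 + 2 * μ ^ 2 * ((w:ℂ) - 1) + ((w:ℂ) + 1) ^ 2 - (d:ℂ) ^ 2
      = (μ^2 - ((1 - (w:ℂ)) + s)) * (μ^2 - ((1 - (w:ℂ)) - s)) := by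
    linear_combination hs'
  rw [key, mul_eq_zero, sub_eq_zero, sub_eq_zero]

lemma sq_lt_iff (a b : ℝ) (ha : 0 ≤ a) (hb : 0 < b) : a < b ↔ a^2 < b^2 := by
  constructor <;> intro h <;> nlinarith

set_option maxHeartbeats 1600000 in
/-- **Stability condition, frequency-window form.**  For `ω̄, δ̄ > 0` and `0 < c < 1`,
every complex root of `P(λ) = λ⁴ + 2λ²(ω̄² - 1) + (ω̄² + 1)² - δ̄²` has real part `< c`
iff `ω̄ > √(1 - c²)` and `2√(1-c²)√(ω̄²+c²) < δ̄ < √(4ω̄² + (ω̄² - 1 + c²)²)`. -/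
theorem stmt9 (ωb δb c : ℝ) (hωb : 0 < ωb) (hδb : 0 < δb) (hc0 : 0 < c) (hc1 : c < 1) :
    (∀ μ : ℂ,
        μ ^ 4 + 2 * μ ^ 2 * ((ωb : ℂ) ^ 2 - 1) + ((ωb : ℂ) ^ 2 + 1) ^ 2 - (δb : ℂ) ^ 2 = 0 →
        μ.re < c) ↔
    (ωb > Real.sqrt (1 - c ^ 2) ∧
      2 * Real.sqrt (1 - c ^ 2) * Real.sqrt (ωb ^ 2 + c ^ 2) < δb ∧
      δb < Real.sqrt (4 * ωb ^ 2 + (ωb ^ 2 - 1 + c ^ 2) ^ 2)) := by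
  -- rewrite the RHS into polynomial inequalities
  have hc2 : (0:ℝ) < 1 - c^2 := by nlinarith
  have r1 : Real.sqrt (1 - c ^ 2) < ωb ↔ 1 - c^2 < ωb^2 := Real.sqrt_lt' hωb
  have hu : (Real.sqrt (1 - c^2))^2 = 1 - c^2 := Real.sq_sqrt hc2.le
  have hv : (Real.sqrt (ωb^2 + c^2))^2 = ωb^2 + c^2 := Real.sq_sqrt (by positivity)
  have huv : (0:ℝ) ≤ 2 * Real.sqrt (1 - c ^ 2) * Real.sqrt (ωb ^ 2 + c ^ 2) := by positivity
  have r2 : 2 * Real.sqrt (1 - c ^ 2) * Real.sqrt (ωb ^ 2 + c ^ 2) < δb ↔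
      4 * (1 - c^2) * (ωb^2 + c^2) < δb^2 := by
    rw [sq_lt_iff _ _ huv hδb]
    constructor <;> intro h <;> nlinarith
  have r3 : δb < Real.sqrt (4 * ωb ^ 2 + (ωb ^ 2 - 1 + c ^ 2) ^ 2) ↔
      δb^2 < 4 * ωb ^ 2 + (ωb ^ 2 - 1 + c ^ 2) ^ 2 := Real.lt_sqrt hδb.le
  rw [gt_iff_lt, r1, r2, r3]
  clear r1 r2 r3 hu hv huv
  -- split on the sign of the discriminant D = δ² - 4ω²
  rcases le_or_gt 0 (δb^2 - 4*ωb^2) with hD | hD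
  · -- real case: s = √D
    set t : ℝ := Real.sqrt (δb^2 - 4*ωb^2) with ht
    have ht2 : t^2 = δb^2 - 4*ωb^2 := Real.sq_sqrt hD
    have ht0 : 0 ≤ t := Real.sqrt_nonneg _
    have hs : (((t : ℝ)) : ℂ)^2 = ((δb^2 - 4*(ωb^2) : ℝ) : ℂ) := by
      rw [show (((t : ℝ)) : ℂ)^2 = (((t^2 : ℝ)):ℂ) by push_cast; ring, ht2]
    have step : (∀ μ : ℂ,
        μ ^ 4 + 2 * μ ^ 2 * ((ωb : ℂ) ^ 2 - 1) + ((ωb : ℂ) ^ 2 + 1) ^ 2 - (δb : ℂ) ^ 2 = 0 →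
        μ.re < c) ↔
        ((∀ μ : ℂ, μ^2 = ((1 - ωb^2 + t : ℝ):ℂ) → μ.re < c) ∧
         (∀ μ : ℂ, μ^2 = ((1 - ωb^2 - t : ℝ):ℂ) → μ.re < c)) := by
      have hr := root_iff (ωb^2) δb (t:ℂ) hs
      push_cast at hr
      constructor
      · intro h
        constructor <;> intro μ hμ <;> refine h μ ((hr μ).mpr ?_) <;> push_cast at hμ ⊢
        · left; exact hμ
        · right; exact hμ
      · rintro ⟨h1, h2⟩ μ hμ
        rcases (hr μ).mp hμ with h | h
        · exact h1 μ (by push_cast at h ⊢; exact h)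
        · exact h2 μ (by push_cast at h ⊢; exact h)
    rw [step, cond_iff c hc0, cond_iff c hc0,
      Complex.norm_real, Complex.norm_real, Real.norm_eq_abs, Real.norm_eq_abs, Complex.ofReal_re, Complex.ofReal_re]
    -- now a purely real statement
    have habs1 : |1 - ωb^2 + t| + (1 - ωb^2 + t) < 2*c^2 ↔ 1 - ωb^2 + t < c^2 := by
      rcases le_or_gt 0 (1 - ωb^2 + t) with h | h
      · rw [abs_of_nonneg h]; constructor <;> intro <;> nlinarith
      · rw [abs_of_neg h]; constructor <;> intro <;> nlinarith
    have habs2 : |1 - ωb^2 - t| + (1 - ωb^2 - t) < 2*c^2 ↔ 1 - ωb^2 - t < c^2 := by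
      rcases le_or_gt 0 (1 - ωb^2 - t) with h | h
      · rw [abs_of_nonneg h]; constructor <;> intro <;> nlinarith
      · rw [abs_of_neg h]; constructor <;> intro <;> nlinarith
    rw [habs1, habs2]
    constructor
    · rintro ⟨h1, h2⟩
      have hK : 0 < ωb^2 + c^2 - 1 := by linarith
      refine ⟨by linarith, ?_, by nlinarith⟩
      nlinarith [mul_pos (pow_pos hc0 2) hK]
    · rintro ⟨g1, g2, g3⟩
      have hK : 0 < ωb^2 + c^2 - 1 := by nlinarith
      have hDK : δb^2 - 4*ωb^2 < (ωb^2 + c^2 - 1)^2 := by nlinarith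
      have htK : t < ωb^2 + c^2 - 1 := by nlinarith
      exact ⟨by linarith, by linarith⟩
  · -- complex case: s = i√(-D)
    set t : ℝ := Real.sqrt (4*ωb^2 - δb^2) with ht
    have ht2 : t^2 = 4*ωb^2 - δb^2 := Real.sq_sqrt (by linarith)
    have ht0 : 0 ≤ t := Real.sqrt_nonneg _
    have hs : (Complex.I * (t:ℂ))^2 = ((δb^2 - 4*(ωb^2) : ℝ) : ℂ) := by
      rw [mul_pow, Complex.I_sq]
      rw [show ((t:ℂ))^2 = (((t^2 : ℝ)):ℂ) by push_cast; ring, ht2]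
      push_cast; ring
    have step : (∀ μ : ℂ,
        μ ^ 4 + 2 * μ ^ 2 * ((ωb : ℂ) ^ 2 - 1) + ((ωb : ℂ) ^ 2 + 1) ^ 2 - (δb : ℂ) ^ 2 = 0 →
        μ.re < c) ↔
        ((∀ μ : ℂ, μ^2 = ((1 - ωb^2 : ℝ):ℂ) + Complex.I * (t:ℂ) → μ.re < c) ∧
         (∀ μ : ℂ, μ^2 = ((1 - ωb^2 : ℝ):ℂ) - Complex.I * (t:ℂ) → μ.re < c)) := by
      have hr := root_iff (ωb^2) δb (Complex.I * (t:ℂ)) hs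
      push_cast at hr
      constructor
      · intro h
        constructor <;> intro μ hμ <;> refine h μ ((hr μ).mpr ?_) <;> push_cast at hμ ⊢
        · left; exact hμ
        · right; exact hμ
      · rintro ⟨h1, h2⟩ μ hμ
        rcases (hr μ).mp hμ with h | h
        · exact h1 μ (by push_cast at h ⊢; exact h)
        · exact h2 μ (by push_cast at h ⊢; exact h)
    rw [step, cond_iff c hc0, cond_iff c hc0]
    -- compute abs and re of A and B
    have hreA : (((1 - ωb^2 : ℝ):ℂ) + Complex.I * (t:ℂ)).re = 1 - ωb^2 := by
      rw [Complex.add_re, Complex.ofReal_re, Complex.mul_re, Complex.I_re, Complex.I_im,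
        Complex.ofReal_re, Complex.ofReal_im]; ring
    have hreB : (((1 - ωb^2 : ℝ):ℂ) - Complex.I * (t:ℂ)).re = 1 - ωb^2 := by
      rw [Complex.sub_re, Complex.ofReal_re, Complex.mul_re, Complex.I_re, Complex.I_im,
        Complex.ofReal_re, Complex.ofReal_im]; ring
    have himA : (((1 - ωb^2 : ℝ):ℂ) + Complex.I * (t:ℂ)).im = t := by
      rw [Complex.add_im, Complex.ofReal_im, Complex.mul_im, Complex.I_re, Complex.I_im,
        Complex.ofReal_re, Complex.ofReal_im]; ring
    have himB : (((1 - ωb^2 : ℝ):ℂ) - Complex.I * (t:ℂ)).im = -t := by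
      rw [Complex.sub_im, Complex.ofReal_im, Complex.mul_im, Complex.I_re, Complex.I_im,
        Complex.ofReal_re, Complex.ofReal_im]; ring
    have habsA : ‖(((1 - ωb^2 : ℝ):ℂ) + Complex.I * (t:ℂ))‖
        = Real.sqrt ((1 - ωb^2)^2 + t^2) := by
      rw [Complex.norm_def, Complex.normSq_apply, hreA, himA]; ring_nf
    have habsB : ‖(((1 - ωb^2 : ℝ):ℂ) - Complex.I * (t:ℂ))‖
        = Real.sqrt ((1 - ωb^2)^2 + t^2) := by
      rw [Complex.norm_def, Complex.normSq_apply, hreB, himB]; ring_nf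
    rw [habsA, habsB, hreA, hreB]
    clear step habsA habsB hreA hreB himA himB hs
    set F : ℝ := (1 - ωb^2)^2 + t^2 with hF
    have hFval : F = (1 + ωb^2)^2 - δb^2 := by rw [hF, ht2]; ring
    have hFpos : 0 < F := by nlinarith [sq_nonneg (1 - ωb^2)]
    have hsF : (Real.sqrt F)^2 = F := Real.sq_sqrt hFpos.le
    have hsF0 : 0 < Real.sqrt F := Real.sqrt_pos.mpr hFpos
    constructor
    · rintro ⟨h1, -⟩
      have hM : 0 < ωb^2 + 2*c^2 - 1 := by linarith
      have hFlt : F < (ωb^2 + 2*c^2 - 1)^2 := by nlinarith [hsF, hsF0, h1]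
      have g2 : 4 * (1 - c^2) * (ωb^2 + c^2) < δb^2 := by nlinarith [hFlt, hFval]
      refine ⟨by nlinarith [g2, hD, mul_pos hc0 hc0], g2,
        by nlinarith [sq_nonneg (ωb^2 - 1 + c^2)]⟩
    · rintro ⟨g1, g2, g3⟩
      have hM : 0 < ωb^2 + 2*c^2 - 1 := by nlinarith
      have hFlt : F < (ωb^2 + 2*c^2 - 1)^2 := by nlinarith [hFval, g2]
      have hlt : Real.sqrt F < ωb^2 + 2*c^2 - 1 := (Real.sqrt_lt' hM).mpr hFlt
      constructor <;> linarith
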